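/- For every μ > 0 there exists n₀ such that for all n ≥ n₀, every 3-graph H on n vertices with at least μn³ edges contains at least μ⁸n⁶/2 copies of K₃³(2). -/

import Mathlib

/-- The number of copies of `K₃³(2)` (the complete 3-partite 3-graph with two vertices in
each part) in the 3-graph with edge set `E`: a copy is identified with its (unordered) set
`Q` of three disjoint parts of size 2 such that every transversal of `Q` is an edge. -/
noncomputable def numK332 {n : ℕ} (E : Finset (Finset (Fin n))) : ℕ :=
  {Q : Finset (Finset (Fin n)) | Q.card = 3 ∧ (∀ p ∈ Q, p.card = 2) ∧
    (∀ p ∈ Q, ∀ q ∈ Q, p ≠ q → Disjoint p q) ∧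
    (∀ f : Finset (Fin n) → Fin n, (∀ p ∈ Q, f p ∈ p) → Q.image f ∈ E)}.ncard

namespace Supersat
open Finset
variable {n : ℕ}

def A (E : Finset (Finset (Fin n))) (x y z : Fin n) : ℝ :=
  if ({x, y, z} : Finset (Fin n)) ∈ E then 1 else 0

lemma A_nonneg (E : Finset (Finset (Fin n))) (x y z : Fin n) : 0 ≤ A E x y z := by
  unfold A; split <;> norm_num

lemma ite_mul_ite (p q : Prop) [Decidable p] [Decidable q] :
    (if p then (1:ℝ) else 0) * (if q then (1:ℝ) else 0) = if p ∧ q then (1:ℝ) else 0 := by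
  split_ifs <;> simp_all

lemma cs {α : Type*} [Fintype α] (f : α → ℝ) :
    (∑ a, f a) ^ 2 ≤ (Fintype.card α : ℝ) * ∑ a, f a ^ 2 := by
  simpa using sq_sum_le_card_mul_sum_sq (s := (univ : Finset α)) (f := f)

lemma card3 {α : Type*} [DecidableEq α] {a b c : α} (h : ({a, b, c} : Finset α).card = 3) :
    a ≠ b ∧ a ≠ c ∧ b ≠ c := by
  have key : ∀ x y : α, ({x, y} : Finset α).card ≤ 2 := fun x y =>
    le_trans (Finset.card_insert_le _ _) (by simp)
  refine ⟨fun hab => ?_, fun hac => ?_, fun hbc => ?_⟩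
  · subst hab
    have hsub : ({a, a, c} : Finset α) ⊆ {a, c} := by intro x hx; simp at hx ⊢; tauto
    have := (Finset.card_le_card hsub).trans (key a c); omega
  · subst hac
    have hsub : ({a, b, a} : Finset α) ⊆ {a, b} := by intro x hx; simp at hx ⊢; tauto
    have := (Finset.card_le_card hsub).trans (key a b); omega
  · subst hbc
    have hsub : ({a, b, b} : Finset α) ⊆ {a, b} := by intro x hx; simp at hx ⊢; tauto
    have := (Finset.card_le_card hsub).trans (key a b); omega


abbrev ρ4 (n : ℕ) := Fin n × Fin n × Fin n × Fin n
abbrev τ (n : ℕ) := Fin n × Fin n × ρ4 n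

def f1 (E : Finset (Finset (Fin n))) (p : Fin n × Fin n) : ℝ := ∑ z, A E p.1 p.2 z
def f2 (E : Finset (Finset (Fin n))) (q : Fin n × Fin n × Fin n) : ℝ :=
  ∑ y, A E q.1 y q.2.1 * A E q.1 y q.2.2
def f3 (E : Finset (Finset (Fin n))) (r : ρ4 n) : ℝ :=
  ∑ x, (A E x r.1 r.2.2.1 * A E x r.1 r.2.2.2) * (A E x r.2.1 r.2.2.1 * A E x r.2.1 r.2.2.2)
def F (E : Finset (Finset (Fin n))) (t : τ n) : ℝ :=
  ((A E t.1 t.2.2.1 t.2.2.2.2.1 * A E t.1 t.2.2.1 t.2.2.2.2.2) *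
    (A E t.1 t.2.2.2.1 t.2.2.2.2.1 * A E t.1 t.2.2.2.1 t.2.2.2.2.2)) *
  ((A E t.2.1 t.2.2.1 t.2.2.2.2.1 * A E t.2.1 t.2.2.1 t.2.2.2.2.2) *
    (A E t.2.1 t.2.2.2.1 t.2.2.2.2.1 * A E t.2.1 t.2.2.2.1 t.2.2.2.2.2))

def C8 (E : Finset (Finset (Fin n))) (t : τ n) : Prop :=
  (({t.1, t.2.2.1, t.2.2.2.2.1} ∈ E ∧ {t.1, t.2.2.1, t.2.2.2.2.2} ∈ E) ∧
   ({t.1, t.2.2.2.1, t.2.2.2.2.1} ∈ E ∧ {t.1, t.2.2.2.1, t.2.2.2.2.2} ∈ E)) ∧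
  (({t.2.1, t.2.2.1, t.2.2.2.2.1} ∈ E ∧ {t.2.1, t.2.2.1, t.2.2.2.2.2} ∈ E) ∧
   ({t.2.1, t.2.2.2.1, t.2.2.2.2.1} ∈ E ∧ {t.2.1, t.2.2.2.1, t.2.2.2.2.2} ∈ E))

instance (E : Finset (Finset (Fin n))) : DecidablePred (C8 E) := fun t => by
  unfold C8; infer_instance

def e1 : ((Fin n × Fin n) × (Fin n × Fin n)) ≃ ((Fin n × Fin n × Fin n) × Fin n) where
  toFun w := ((w.1.1, w.2.1, w.2.2), w.1.2)
  invFun v := ((v.1.1, v.2), (v.1.2.1, v.1.2.2))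
  left_inv _ := rfl
  right_inv _ := rfl

def e2 : ((Fin n × Fin n × Fin n) × (Fin n × Fin n)) ≃ (ρ4 n × Fin n) where
  toFun w := ((w.2.1, w.2.2, w.1.2.1, w.1.2.2), w.1.1)
  invFun v := ((v.2, v.1.2.2.1, v.1.2.2.2), (v.1.1, v.1.2.1))
  left_inv _ := rfl
  right_inv _ := rfl

def e3 : (ρ4 n × (Fin n × Fin n)) ≃ τ n where
  toFun w := (w.2.1, w.2.2, w.1)
  invFun t := (t.2.2, (t.1, t.2.1))
  left_inv _ := rfl
  right_inv _ := rfl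

variable (E : Finset (Finset (Fin n)))


lemma eqS : ∑ p, f1 E p =
    ((univ.filter fun v : (Fin n × Fin n) × Fin n => ({v.1.1, v.1.2, v.2} : Finset (Fin n)) ∈ E).card : ℝ) := by
  rw [← Finset.sum_boole]
  simp only [Fintype.sum_prod_type]
  exact Finset.sum_congr rfl fun x _ => Finset.sum_congr rfl fun y _ => rfl

lemma eq1 : ∑ p, f1 E p ^ 2 = ∑ q, f2 E q := by
  have lhs : ∑ p, f1 E p ^ 2 = ∑ w : (Fin n × Fin n) × (Fin n × Fin n),
      A E w.1.1 w.1.2 w.2.1 * A E w.1.1 w.1.2 w.2.2 := by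
    simp only [Fintype.sum_prod_type]
    exact Finset.sum_congr rfl fun x _ => Finset.sum_congr rfl fun y _ => by
      rw [pow_two]; exact Finset.sum_mul_sum _ _ _ _
  have rhs : ∑ q, f2 E q = ∑ v : (Fin n × Fin n × Fin n) × Fin n,
      A E v.1.1 v.2 v.1.2.1 * A E v.1.1 v.2 v.1.2.2 := by
    simp only [Fintype.sum_prod_type]
    rfl
  exact lhs.trans ((Fintype.sum_equiv e1 _ _ fun w => rfl).trans rhs.symm)

lemma eq2 : ∑ q, f2 E q ^ 2 = ∑ r, f3 E r := by
  have lhs : ∑ q, f2 E q ^ 2 = ∑ w : (Fin n × Fin n × Fin n) × (Fin n × Fin n),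
      (A E w.1.1 w.2.1 w.1.2.1 * A E w.1.1 w.2.1 w.1.2.2) *
        (A E w.1.1 w.2.2 w.1.2.1 * A E w.1.1 w.2.2 w.1.2.2) := by
    simp only [Fintype.sum_prod_type]
    exact Finset.sum_congr rfl fun x _ => Finset.sum_congr rfl fun z1 _ =>
      Finset.sum_congr rfl fun z2 _ => by
        rw [pow_two]; exact Finset.sum_mul_sum _ _ _ _
  have rhs : ∑ r, f3 E r = ∑ v : ρ4 n × Fin n,
      (A E v.2 v.1.1 v.1.2.2.1 * A E v.2 v.1.1 v.1.2.2.2) *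
        (A E v.2 v.1.2.1 v.1.2.2.1 * A E v.2 v.1.2.1 v.1.2.2.2) := by
    simp only [Fintype.sum_prod_type]
    rfl
  exact lhs.trans ((Fintype.sum_equiv e2 _ _ fun w => rfl).trans rhs.symm)

lemma eq3 : ∑ r, f3 E r ^ 2 = ∑ t, F E t := by
  have lhs : ∑ r, f3 E r ^ 2 = ∑ w : ρ4 n × (Fin n × Fin n),
      ((A E w.2.1 w.1.1 w.1.2.2.1 * A E w.2.1 w.1.1 w.1.2.2.2) *
        (A E w.2.1 w.1.2.1 w.1.2.2.1 * A E w.2.1 w.1.2.1 w.1.2.2.2)) *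
      ((A E w.2.2 w.1.1 w.1.2.2.1 * A E w.2.2 w.1.1 w.1.2.2.2) *
        (A E w.2.2 w.1.2.1 w.1.2.2.1 * A E w.2.2 w.1.2.1 w.1.2.2.2)) := by
    simp only [Fintype.sum_prod_type]
    exact Finset.sum_congr rfl fun y1 _ => Finset.sum_congr rfl fun y2 _ =>
      Finset.sum_congr rfl fun z1 _ => Finset.sum_congr rfl fun z2 _ => by
        rw [pow_two]; exact Finset.sum_mul_sum _ _ _ _
  exact lhs.trans (Fintype.sum_equiv e3 _ _ fun w => rfl)

lemma F_ite (t : τ n) : F E t = if C8 E t then (1:ℝ) else 0 := by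
  unfold F C8 A
  simp only [ite_mul_ite]

lemma eqN : ∑ t, F E t = ((univ.filter (C8 E)).card : ℝ) := by
  rw [← Finset.sum_boole]
  exact Finset.sum_congr rfl fun t _ => F_ite E t


/-- ordered triples are at least twice the number of edges -/
lemma trip_lb (hE : ∀ e ∈ E, e.card = 3) :
    2 * E.card ≤ (univ.filter fun v : (Fin n × Fin n) × Fin n =>
      ({v.1.1, v.1.2, v.2} : Finset (Fin n)) ∈ E).card := by
  apply Finset.mul_card_image_le_card_of_maps_to
    (f := fun v : (Fin n × Fin n) × Fin n => ({v.1.1, v.1.2, v.2} : Finset (Fin n)))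
  · intro v hv
    simpa using (Finset.mem_filter.1 hv).2
  · intro e he
    obtain ⟨a, b, c, hab, hac, hbc, rfl⟩ := Finset.card_eq_three.1 (hE e he)
    have h1 : ((a, b), c) ∈ (univ.filter fun v : (Fin n × Fin n) × Fin n =>
        ({v.1.1, v.1.2, v.2} : Finset (Fin n)) ∈ E) ∧
        ({a, b, c} : Finset (Fin n)) = {a, b, c} := by
      exact ⟨Finset.mem_filter.2 ⟨mem_univ _, he⟩, rfl⟩
    have hcomm : ({a, c, b} : Finset (Fin n)) = {a, b, c} := by
      rw [Finset.pair_comm c b]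
    have h2 : ((a, c), b) ∈ (univ.filter fun v : (Fin n × Fin n) × Fin n =>
        ({v.1.1, v.1.2, v.2} : Finset (Fin n)) ∈ E) := by
      refine Finset.mem_filter.2 ⟨mem_univ _, ?_⟩
      simpa [hcomm] using he
    have hne : (((a, b), c) : (Fin n × Fin n) × Fin n) ≠ ((a, c), b) := by
      simp [Prod.ext_iff]; tauto
    refine Nat.succ_le_of_lt ?_
    rw [Nat.lt_iff_add_one_le]
    refine Finset.one_lt_card.2 ⟨((a,b),c), ?_, ((a,c),b), ?_, hne⟩
    · exact Finset.mem_filter.2 ⟨Finset.mem_filter.2 ⟨mem_univ _, he⟩, rfl⟩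
    · exact Finset.mem_filter.2 ⟨h2, hcomm⟩


lemma cardD1 : (univ.filter fun t : τ n => t.1 = t.2.1).card ≤ n ^ 5 := by
  calc (univ.filter fun t : τ n => t.1 = t.2.1).card
      ≤ (univ : Finset (Fin n × ρ4 n)).card := by
        apply Finset.card_le_card_of_injOn (fun t => t.2) (fun a _ => mem_univ _)
        intro a ha b hb h
        simp only [coe_filter, Set.mem_setOf_eq, mem_univ, true_and] at ha hb
        exact Prod.ext (by rw [ha, hb]; exact congrArg Prod.fst h) h
    _ = n ^ 5 := by
        simp only [Finset.card_univ, Fintype.card_prod, Fintype.card_fin]; ring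

lemma cardD2 : (univ.filter fun t : τ n => t.2.2.1 = t.2.2.2.1).card ≤ n ^ 5 := by
  calc (univ.filter fun t : τ n => t.2.2.1 = t.2.2.2.1).card
      ≤ (univ : Finset (Fin n × Fin n × Fin n × Fin n × Fin n)).card := by
        apply Finset.card_le_card_of_injOn (fun t => (t.1, t.2.1, t.2.2.2))
          (fun a _ => mem_univ _)
        intro a ha b hb h
        simp only [coe_filter, Set.mem_setOf_eq, mem_univ, true_and] at ha hb
        obtain ⟨a1, a2, a3, a4, a5, a6⟩ := a
        obtain ⟨b1, b2, b3, b4, b5, b6⟩ := b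
        simp_all [Prod.ext_iff]
    _ = n ^ 5 := by
        simp only [Finset.card_univ, Fintype.card_prod, Fintype.card_fin]; ring

lemma cardD3 : (univ.filter fun t : τ n => t.2.2.2.2.1 = t.2.2.2.2.2).card ≤ n ^ 5 := by
  calc (univ.filter fun t : τ n => t.2.2.2.2.1 = t.2.2.2.2.2).card
      ≤ (univ : Finset (Fin n × Fin n × Fin n × Fin n × Fin n)).card := by
        apply Finset.card_le_card_of_injOn
          (fun t => (t.1, t.2.1, t.2.2.1, t.2.2.2.1, t.2.2.2.2.1)) (fun a _ => mem_univ _)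
        intro a ha b hb h
        simp only [coe_filter, Set.mem_setOf_eq, mem_univ, true_and] at ha hb
        obtain ⟨a1, a2, a3, a4, a5, a6⟩ := a
        obtain ⟨b1, b2, b3, b4, b5, b6⟩ := b
        simp_all [Prod.ext_iff]
    _ = n ^ 5 := by
        simp only [Finset.card_univ, Fintype.card_prod, Fintype.card_fin]; ring


lemma good_Q (E : Finset (Finset (Fin n))) (hE : ∀ e ∈ E, e.card = 3)
    {x1 x2 y1 y2 z1 z2 : Fin n}
    (h1 : {x1, y1, z1} ∈ E) (h2 : {x1, y1, z2} ∈ E)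
    (h3 : {x1, y2, z1} ∈ E) (h4 : {x1, y2, z2} ∈ E)
    (h5 : {x2, y1, z1} ∈ E) (h6 : {x2, y1, z2} ∈ E)
    (h7 : {x2, y2, z1} ∈ E) (h8 : {x2, y2, z2} ∈ E)
    (hx : x1 ≠ x2) (hy : y1 ≠ y2) (hz : z1 ≠ z2) :
    (({{x1, x2}, {y1, y2}, {z1, z2}} : Finset (Finset (Fin n))).card = 3 ∧
      (∀ p ∈ ({{x1, x2}, {y1, y2}, {z1, z2}} : Finset (Finset (Fin n))), p.card = 2) ∧
      (∀ p ∈ ({{x1, x2}, {y1, y2}, {z1, z2}} : Finset (Finset (Fin n))),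
        ∀ q ∈ ({{x1, x2}, {y1, y2}, {z1, z2}} : Finset (Finset (Fin n))), p ≠ q → Disjoint p q) ∧
      (∀ f : Finset (Fin n) → Fin n,
        (∀ p ∈ ({{x1, x2}, {y1, y2}, {z1, z2}} : Finset (Finset (Fin n))), f p ∈ p) →
        ({{x1, x2}, {y1, y2}, {z1, z2}} : Finset (Finset (Fin n))).image f ∈ E)) := by
  obtain ⟨d11, d12, d13⟩ := card3 (hE _ h1)   -- x1≠y1, x1≠z1, y1≠z1
  obtain ⟨d21, d22, d23⟩ := card3 (hE _ h2)   -- x1≠y1, x1≠z2, y1≠z2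
  obtain ⟨d31, d32, d33⟩ := card3 (hE _ h3)   -- x1≠y2, x1≠z1, y2≠z1
  obtain ⟨d41, d42, d43⟩ := card3 (hE _ h4)   -- x1≠y2, x1≠z2, y2≠z2
  obtain ⟨d51, d52, d53⟩ := card3 (hE _ h5)   -- x2≠y1, x2≠z1, y1≠z1
  obtain ⟨d61, d62, d63⟩ := card3 (hE _ h6)   -- x2≠y1, x2≠z2
  obtain ⟨d71, d72, d73⟩ := card3 (hE _ h7)   -- x2≠y2, x2≠z1
  obtain ⟨d81, d82, d83⟩ := card3 (hE _ h8)   -- x2≠y2, x2≠z2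
  have hPxy : ({x1, x2} : Finset (Fin n)) ≠ {y1, y2} := by
    intro h
    have : x1 ∈ ({y1, y2} : Finset (Fin n)) := h ▸ (by simp)
    simp at this; tauto
  have hPxz : ({x1, x2} : Finset (Fin n)) ≠ {z1, z2} := by
    intro h
    have : x1 ∈ ({z1, z2} : Finset (Fin n)) := h ▸ (by simp)
    simp at this; tauto
  have hPyz : ({y1, y2} : Finset (Fin n)) ≠ {z1, z2} := by
    intro h
    have : y1 ∈ ({z1, z2} : Finset (Fin n)) := h ▸ (by simp)
    simp at this; tauto
  refine ⟨?_, ?_, ?_, ?_⟩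
  · rw [Finset.card_insert_of_notMem (by simp [hPxy, hPxz]),
      Finset.card_insert_of_notMem (by simp [hPyz]), Finset.card_singleton]
  · intro p hp
    simp only [Finset.mem_insert, Finset.mem_singleton] at hp
    rcases hp with rfl | rfl | rfl
    · exact Finset.card_pair hx
    · exact Finset.card_pair hy
    · exact Finset.card_pair hz
  · have dxy : Disjoint ({x1, x2} : Finset (Fin n)) {y1, y2} := by
      simp [Finset.disjoint_left]
      refine ⟨⟨d11, d31⟩, ⟨d51, d71⟩⟩
    have dxz : Disjoint ({x1, x2} : Finset (Fin n)) {z1, z2} := by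
      simp [Finset.disjoint_left]
      refine ⟨⟨d12, d22⟩, ⟨d52, d62⟩⟩
    have dyz : Disjoint ({y1, y2} : Finset (Fin n)) {z1, z2} := by
      simp [Finset.disjoint_left]
      refine ⟨⟨d13, d23⟩, ⟨d33, d43⟩⟩
    intro p hp q hq hpq
    simp only [Finset.mem_insert, Finset.mem_singleton] at hp hq
    rcases hp with rfl | rfl | rfl <;> rcases hq with rfl | rfl | rfl <;>
      first
        | exact absurd rfl hpq
        | exact dxy | exact dxz | exact dyz
        | exact dxy.symm | exact dxz.symm | exact dyz.symm
  · intro f hf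
    have hfx := hf _ (by simp : ({x1, x2} : Finset (Fin n)) ∈ _)
    have hfy := hf _ (by simp : ({y1, y2} : Finset (Fin n)) ∈ _)
    have hfz := hf _ (by simp : ({z1, z2} : Finset (Fin n)) ∈ _)
    rw [Finset.image_insert, Finset.image_insert, Finset.image_singleton]
    simp only [Finset.mem_insert, Finset.mem_singleton] at hfx hfy hfz
    rcases hfx with hx' | hx' <;> rcases hfy with hy' | hy' <;> rcases hfz with hz' | hz' <;>
      rw [hx', hy', hz'] <;> assumption


def toQ (t : τ n) : Finset (Finset (Fin n)) :=
  {{t.1, t.2.1}, {t.2.2.1, t.2.2.2.1}, {t.2.2.2.2.1, t.2.2.2.2.2}}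

lemma pair_eq {α : Type*} [DecidableEq α] {a1 a2 b1 b2 : α}
    (h : ({a1, a2} : Finset α) = {b1, b2}) (h1 : a1 = b1) (hne : a1 ≠ a2) : a2 = b2 := by
  have ha2 : a2 ∈ ({b1, b2} : Finset α) := h ▸ (by simp)
  simp at ha2
  rcases ha2 with rfl | rfl
  · exact absurd h1.symm hne.symm
  · rfl

lemma fiber_bound (s : Finset (τ n))
    (hs : ∀ t ∈ s, t.1 ≠ t.2.1 ∧ t.2.2.1 ≠ t.2.2.2.1 ∧ t.2.2.2.2.1 ≠ t.2.2.2.2.2)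
    (Q : Finset (Finset (Fin n))) :
    (s.filter fun a => toQ a = Q).card ≤ 216 := by
  rcases (s.filter fun a => toQ a = Q).eq_empty_or_nonempty with he | ⟨t0, ht0⟩
  · simp [he]
  obtain ⟨ht0s, ht0Q⟩ := mem_filter.1 ht0
  have hpair2 : ∀ u v : Fin n, ({u, v} : Finset (Fin n)).card ≤ 2 := fun u v =>
    le_trans (Finset.card_insert_le _ _) (by simp)
  have hQ3 : Q.card ≤ 3 := by
    rw [← ht0Q]
    unfold toQ
    have h1 := Finset.card_insert_le ({t0.1, t0.2.1} : Finset (Fin n))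
      ({({t0.2.2.1, t0.2.2.2.1} : Finset (Fin n)), {t0.2.2.2.2.1, t0.2.2.2.2.2}} :
        Finset (Finset (Fin n)))
    have h2 := Finset.card_insert_le ({t0.2.2.1, t0.2.2.2.1} : Finset (Fin n))
      ({({t0.2.2.2.2.1, t0.2.2.2.2.2} : Finset (Fin n))} : Finset (Finset (Fin n)))
    simp only [Finset.card_singleton] at h1 h2
    omega
  have hQ2 : ∀ p ∈ Q, p.card ≤ 2 := by
    rw [← ht0Q]
    intro p hp
    unfold toQ at hp
    simp only [Finset.mem_insert, Finset.mem_singleton] at hp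
    rcases hp with rfl | rfl | rfl <;> exact hpair2 _ _
  set B : Finset (Finset (Fin n) × Fin n) := Q.biUnion fun p => p.image fun v => (p, v) with hB
  have hBcard : B.card ≤ 6 := by
    calc B.card ≤ ∑ p ∈ Q, (p.image fun v => (p, v)).card := Finset.card_biUnion_le
      _ ≤ ∑ p ∈ Q, 2 := Finset.sum_le_sum fun p hp =>
          le_trans (Finset.card_image_le) (hQ2 p hp)
      _ = Q.card * 2 := by rw [Finset.sum_const, smul_eq_mul]
      _ ≤ 6 := by omega
  have hmain : (s.filter fun a => toQ a = Q).card ≤ (B ×ˢ B ×ˢ B).card := by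
    apply Finset.card_le_card_of_injOn
      (fun t => (({t.1, t.2.1}, t.1), (({t.2.2.1, t.2.2.2.1}, t.2.2.1),
        ({t.2.2.2.2.1, t.2.2.2.2.2}, t.2.2.2.2.1))))
    · intro a ha
      obtain ⟨has, haQ⟩ := mem_filter.1 ha
      have m1 : ({a.1, a.2.1} : Finset (Fin n)) ∈ Q := by
        rw [← haQ]; simp [toQ]
      have m2 : ({a.2.2.1, a.2.2.2.1} : Finset (Fin n)) ∈ Q := by
        rw [← haQ]; simp [toQ]
      have m3 : ({a.2.2.2.2.1, a.2.2.2.2.2} : Finset (Fin n)) ∈ Q := by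
        rw [← haQ]; simp [toQ]
      simp only [Finset.mem_coe, Finset.mem_product]
      refine ⟨Finset.mem_biUnion.2 ⟨_, m1, Finset.mem_image_of_mem _ (by simp)⟩,
        Finset.mem_biUnion.2 ⟨_, m2, Finset.mem_image_of_mem _ (by simp)⟩,
        Finset.mem_biUnion.2 ⟨_, m3, Finset.mem_image_of_mem _ (by simp)⟩⟩
    · intro a ha b hb h
      simp only [Finset.coe_filter, Set.mem_setOf_eq] at ha hb
      obtain ⟨hax, hay, haz⟩ := hs a ha.1
      obtain ⟨hbx, hby, hbz⟩ := hs b hb.1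
      obtain ⟨a1, a2, a3, a4, a5, a6⟩ := a
      obtain ⟨b1, b2, b3, b4, b5, b6⟩ := b
      simp only [Prod.mk.injEq] at h
      obtain ⟨⟨hp1, he1⟩, ⟨hp2, he2⟩, ⟨hp3, he3⟩⟩ := h
      have := pair_eq hp1 he1 hax
      have := pair_eq hp2 he2 hay
      have := pair_eq hp3 he3 haz
      simp_all
  calc (s.filter fun a => toQ a = Q).card ≤ (B ×ˢ B ×ˢ B).card := hmain
    _ = B.card * (B.card * B.card) := by rw [Finset.card_product, Finset.card_product]
    _ ≤ 216 := by
        calc B.card * (B.card * B.card) ≤ 6 * (6 * 6) :=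
          Nat.mul_le_mul hBcard (Nat.mul_le_mul hBcard hBcard)
        _ = 216 := rfl


end Supersat

open Finset Supersat in
/-- Supersaturation: for every `μ > 0` and sufficiently large `n`, every
`n`-vertex 3-graph with at least `μn³` edges contains at least `μ⁸n⁶/2` copies of
`K₃³(2)`. -/
theorem supersaturation (μ : ℝ) (hμ : 0 < μ) :
    ∃ n₀ : ℕ, ∀ n : ℕ, n₀ ≤ n →
      ∀ E : Finset (Finset (Fin n)), (∀ e ∈ E, e.card = 3) →
      μ * (n : ℝ) ^ 3 ≤ (E.card : ℝ) →
      μ ^ 8 * (n : ℝ) ^ 6 / 2 ≤ (numK332 E : ℝ) := by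
  refine ⟨⌈μ⁻¹ ^ 8⌉₊ + 1, fun n hn E hE hcard => ?_⟩
  have hn1 : 1 ≤ n := le_trans (by omega) hn
  have hnR : (1 : ℝ) ≤ (n : ℝ) := by exact_mod_cast hn1
  have hμn : 1 ≤ μ ^ 8 * (n : ℝ) := by
    have h1 : (μ⁻¹ ^ 8 : ℝ) ≤ (n : ℝ) := by
      calc (μ⁻¹ ^ 8 : ℝ) ≤ (⌈μ⁻¹ ^ 8⌉₊ : ℝ) := Nat.le_ceil _
        _ ≤ (n : ℝ) := by exact_mod_cast le_trans (Nat.le_succ _) hn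
    calc (1 : ℝ) = μ ^ 8 * μ⁻¹ ^ 8 := by field_simp
      _ ≤ μ ^ 8 * n := by gcongr
  -- nonnegativity of the sums
  have hf2nn : (0:ℝ) ≤ ∑ q, f2 E q :=
    Finset.sum_nonneg fun q _ => Finset.sum_nonneg fun y _ =>
      mul_nonneg (A_nonneg E _ _ _) (A_nonneg E _ _ _)
  have hf3nn : (0:ℝ) ≤ ∑ r, f3 E r :=
    Finset.sum_nonneg fun r _ => Finset.sum_nonneg fun x _ =>
      mul_nonneg (mul_nonneg (A_nonneg E _ _ _) (A_nonneg E _ _ _))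
        (mul_nonneg (A_nonneg E _ _ _) (A_nonneg E _ _ _))
  -- the three Cauchy-Schwarz steps
  have hcs1 : (∑ p, f1 E p) ^ 2 ≤ (n:ℝ) ^ 2 * ∑ q, f2 E q := by
    have h := cs (f1 E)
    rw [eq1 E] at h
    calc (∑ p, f1 E p) ^ 2 ≤ (Fintype.card (Fin n × Fin n) : ℝ) * ∑ q, f2 E q := h
      _ = (n:ℝ) ^ 2 * ∑ q, f2 E q := by
          push_cast [Fintype.card_prod, Fintype.card_fin]; ring
  have hcs2 : (∑ q, f2 E q) ^ 2 ≤ (n:ℝ) ^ 3 * ∑ r, f3 E r := by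
    have h := cs (f2 E)
    rw [eq2 E] at h
    calc (∑ q, f2 E q) ^ 2
        ≤ (Fintype.card (Fin n × Fin n × Fin n) : ℝ) * ∑ r, f3 E r := h
      _ = (n:ℝ) ^ 3 * ∑ r, f3 E r := by
          push_cast [Fintype.card_prod, Fintype.card_fin]; ring
  have hcs3 : (∑ r, f3 E r) ^ 2 ≤ (n:ℝ) ^ 4 * ∑ t, F E t := by
    have h := cs (f3 E)
    rw [eq3 E] at h
    calc (∑ r, f3 E r) ^ 2 ≤ (Fintype.card (ρ4 n) : ℝ) * ∑ t, F E t := h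
      _ = (n:ℝ) ^ 4 * ∑ t, F E t := by
          push_cast [Fintype.card_prod, Fintype.card_fin]; ring
  -- lower bound on the number of ordered edges
  have hS_lb : 2 * μ * (n:ℝ) ^ 3 ≤ ∑ p, f1 E p := by
    rw [eqS E]
    refine le_trans (by nlinarith [hcard] : 2 * μ * (n:ℝ)^3 ≤ 2 * (E.card : ℝ)) ?_
    exact_mod_cast trip_lb E hE
  -- combine: N ≥ 256 μ⁸ n⁶
  have big : (∑ p, f1 E p) ^ 8 ≤ (n:ℝ) ^ 18 * ∑ t, F E t := by
    calc (∑ p, f1 E p) ^ 8 = ((∑ p, f1 E p) ^ 2) ^ 4 := by ring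
      _ ≤ ((n:ℝ) ^ 2 * ∑ q, f2 E q) ^ 4 := pow_le_pow_left₀ (sq_nonneg _) hcs1 4
      _ = (n:ℝ) ^ 8 * ((∑ q, f2 E q) ^ 2) ^ 2 := by ring
      _ ≤ (n:ℝ) ^ 8 * ((n:ℝ) ^ 3 * ∑ r, f3 E r) ^ 2 :=
          mul_le_mul_of_nonneg_left (pow_le_pow_left₀ (sq_nonneg _) hcs2 2) (by positivity)
      _ = (n:ℝ) ^ 14 * (∑ r, f3 E r) ^ 2 := by ring
      _ ≤ (n:ℝ) ^ 14 * ((n:ℝ) ^ 4 * ∑ t, F E t) :=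
          mul_le_mul_of_nonneg_left hcs3 (by positivity)
      _ = (n:ℝ) ^ 18 * ∑ t, F E t := by ring
  have hN_lb : 256 * μ ^ 8 * (n:ℝ) ^ 6 ≤ ∑ t, F E t := by
    have hpos : (0:ℝ) < (n:ℝ) ^ 18 := by positivity
    refine le_of_mul_le_mul_left ?_ hpos
    calc (n:ℝ) ^ 18 * (256 * μ ^ 8 * (n:ℝ) ^ 6) = (2 * μ * (n:ℝ) ^ 3) ^ 8 := by ring
      _ ≤ (∑ p, f1 E p) ^ 8 := pow_le_pow_left₀ (by positivity) hS_lb 8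
      _ ≤ (n:ℝ) ^ 18 * ∑ t, F E t := big
  -- counting
  have hNT : ∑ t, F E t = (((univ.filter (C8 E)).card : ℕ) : ℝ) := eqN E
  have hsplit := Finset.card_filter_add_card_filter_not
    (s := univ.filter (C8 E)) (p := fun t : τ n =>
      t.1 ≠ t.2.1 ∧ t.2.2.1 ≠ t.2.2.2.1 ∧ t.2.2.2.2.1 ≠ t.2.2.2.2.2)
  set T : Finset (τ n) := univ.filter (C8 E) with hT_def
  set G : Finset (τ n) := T.filter (fun t : τ n =>
    t.1 ≠ t.2.1 ∧ t.2.2.1 ≠ t.2.2.2.1 ∧ t.2.2.2.2.1 ≠ t.2.2.2.2.2) with hG_def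
  have hbad : (T.filter fun t : τ n =>
      ¬(t.1 ≠ t.2.1 ∧ t.2.2.1 ≠ t.2.2.2.1 ∧ t.2.2.2.2.1 ≠ t.2.2.2.2.2)).card ≤ 3 * n ^ 5 := by
    have hsub : (T.filter fun t : τ n =>
        ¬(t.1 ≠ t.2.1 ∧ t.2.2.1 ≠ t.2.2.2.1 ∧ t.2.2.2.2.1 ≠ t.2.2.2.2.2)) ⊆
        (univ.filter fun t : τ n => t.1 = t.2.1) ∪
        ((univ.filter fun t : τ n => t.2.2.1 = t.2.2.2.1) ∪
          (univ.filter fun t : τ n => t.2.2.2.2.1 = t.2.2.2.2.2)) := by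
      intro t ht
      simp only [mem_filter, mem_union, mem_univ, true_and, hT_def] at ht ⊢
      tauto
    calc _ ≤ _ := Finset.card_le_card hsub
      _ ≤ (univ.filter fun t : τ n => t.1 = t.2.1).card +
          ((univ.filter fun t : τ n => t.2.2.1 = t.2.2.2.1).card +
            (univ.filter fun t : τ n => t.2.2.2.2.1 = t.2.2.2.2.2).card) :=
          le_trans (Finset.card_union_le _ _)
            (by exact Nat.add_le_add_left (Finset.card_union_le _ _) _)
      _ ≤ 3 * n ^ 5 := by
          have := cardD1 (n := n); have := cardD2 (n := n); have := cardD3 (n := n)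
          omega
  have hTG : T.card ≤ G.card + 3 * n ^ 5 := by omega
  -- from G to copies
  have hGnum : G.card ≤ 216 * numK332 E := by
    have hds : ∀ t ∈ G, t.1 ≠ t.2.1 ∧ t.2.2.1 ≠ t.2.2.2.1 ∧ t.2.2.2.2.1 ≠ t.2.2.2.2.2 :=
      fun t ht => (Finset.mem_filter.1 ht).2
    have h1 : G.card ≤ 216 * (G.image toQ).card :=
      Finset.card_le_mul_card_image _ 216 (fun Q _ => fiber_bound G hds Q)
    have h2 : (G.image toQ).card ≤ numK332 E := by
      unfold numK332
      rw [Set.ncard_eq_toFinset_card]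
      apply Finset.card_le_card
      intro Q hQ
      rw [Set.Finite.mem_toFinset]
      obtain ⟨t, htG, rfl⟩ := Finset.mem_image.1 hQ
      have htT : t ∈ T := (Finset.mem_filter.1 htG).1
      have hC : C8 E t := (Finset.mem_filter.1 htT).2
      obtain ⟨hd1, hd2, hd3⟩ := hds t htG
      obtain ⟨⟨⟨m1, m2⟩, m3, m4⟩, ⟨m5, m6⟩, m7, m8⟩ := hC
      exact good_Q E hE m1 m2 m3 m4 m5 m6 m7 m8 hd1 hd2 hd3
    calc G.card ≤ 216 * (G.image toQ).card := h1
      _ ≤ 216 * numK332 E := Nat.mul_le_mul_left _ h2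
  -- final arithmetic
  have hTreal : 256 * μ ^ 8 * (n:ℝ) ^ 6 ≤ (T.card : ℝ) := by rw [← hNT]; exact hN_lb
  have hTGr2 : (T.card : ℝ) ≤ (G.card : ℝ) + 3 * (n:ℝ) ^ 5 := by exact_mod_cast hTG
  have hGr2 : (G.card : ℝ) ≤ 216 * (numK332 E : ℝ) := by exact_mod_cast hGnum
  have hn5 : (0:ℝ) ≤ (n:ℝ) ^ 5 := by positivity
  nlinarith [mul_le_mul_of_nonneg_right hμn hn5]
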